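/- The augmentation ideal I = ker ε of the group algebra AddMonoidAlgebra R G satisfies I^(k+1) = 0 (the zero ideal). -/

import Mathlib

/-- Sharper binomial bound for ideal powers. -/
lemma aux_add_pow_le {A : Type*} [CommRing A] (I J : Ideal A) (m n : ℕ) :
    (I ⊔ J) ^ (m + n + 1) ≤ I ^ (m + 1) ⊔ J ^ (n + 1) := by
  rw [← Ideal.add_eq_sup, add_pow, Ideal.sum_eq_sup]
  apply Finset.sup_le
  intro i hi
  by_cases hm : m + 1 ≤ i
  · exact Ideal.mul_le_left.trans (Ideal.mul_le_left.trans
      ((Ideal.pow_le_pow_right hm).trans le_sup_left))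
  · refine Ideal.mul_le_left.trans (Ideal.mul_le_right.trans
      ((Ideal.pow_le_pow_right ?_).trans le_sup_right))
    simp only [Finset.mem_range] at hi
    omega

/-- If every element of a finite set squares to zero then the ideal it spans is nilpotent
with index at most `card + 1`. -/
lemma aux_span_pow_eq_bot {A : Type*} [CommRing A] (s : Finset A)
    (h : ∀ a ∈ s, a ^ 2 = 0) : Ideal.span (s : Set A) ^ (s.card + 1) = ⊥ := by
  classical
  induction s using Finset.induction with
  | empty => simp
  | insert _ _ ha ih =>
    rename_i a t
    have hsq : a ^ 2 = 0 := h a (Finset.mem_insert_self a t)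
    have ht : Ideal.span (t : Set A) ^ (t.card + 1) = ⊥ :=
      ih fun b hb => h b (Finset.mem_insert_of_mem hb)
    rw [Finset.coe_insert, Set.insert_eq, Ideal.span_union, Finset.card_insert_of_notMem ha]
    refine le_bot_iff.mp ?_
    have : t.card + 1 + 1 = 1 + t.card + 1 := by ring
    rw [this]
    refine (aux_add_pow_le _ _ 1 t.card).trans ?_
    rw [Ideal.span_singleton_pow, hsq, ht, Ideal.span_singleton_eq_bot.mpr rfl]
    simp

/-- Over a commutative ring of characteristic 2, the augmentation ideal `I = ker ε` of the
group algebra of `G = Fin k → ZMod 2` satisfies `I ^ (k + 1) = 0`. -/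
theorem augmentationIdeal_pow_succ_eq_bot (k : ℕ) (R : Type*) [CommRing R] [CharP R 2]
    (ε : AddMonoidAlgebra R (Fin k → ZMod 2) →ₐ[R] R)
    (hε : ∀ (g : Fin k → ZMod 2) (r : R), ε (AddMonoidAlgebra.single g r) = r) :
    (RingHom.ker ε) ^ (k + 1) = ⊥ := by
  classical
  set G := Fin k → ZMod 2
  set A := AddMonoidAlgebra R G
  have h2 : (2 : R) = 0 := by
    have := CharP.cast_eq_zero R 2
    exact_mod_cast this
  -- the generating set
  set s : Finset A :=
    Finset.image (fun i : Fin k =>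
      AddMonoidAlgebra.single (Pi.single i (1 : ZMod 2)) (1 : R) - 1) Finset.univ with hs
  -- every element single g 1 - 1 squares to zero and lies in the span
  have hone : (AddMonoidAlgebra.single (0 : G) (1 : R)) = 1 := rfl
  have hmul : ∀ g h : G, AddMonoidAlgebra.single g (1 : R) *
      AddMonoidAlgebra.single h (1 : R) = AddMonoidAlgebra.single (g + h) (1 : R) := by
    intro g h
    rw [AddMonoidAlgebra.single_mul_single, one_mul]
  have hsq : ∀ g : G, (AddMonoidAlgebra.single g (1 : R) - 1) ^ 2 = 0 := by
    intro g
    have hg : g + g = 0 := by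
      funext i
      show g i + g i = 0
      revert i
      intro i
      generalize g i = x
      revert x; decide
    have hx : AddMonoidAlgebra.single g (1 : R) * AddMonoidAlgebra.single g (1 : R) = 1 := by
      rw [hmul, hg, hone]
    have h2A : (2 : A) = 0 := by
      rw [← map_ofNat (algebraMap R A) 2, h2, map_zero]
    have expand : (AddMonoidAlgebra.single g (1 : R) - 1) ^ 2 =
        AddMonoidAlgebra.single g (1 : R) * AddMonoidAlgebra.single g (1 : R)
          - 2 * AddMonoidAlgebra.single g (1 : R) + 1 := by ring
    rw [expand, hx, h2A]
    ring_nf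
    rw [zero_mul, sub_zero, one_add_one_eq_two, h2A]
  -- every single g 1 - 1 is in the span of the generators
  have hmem : ∀ g : G, AddMonoidAlgebra.single g (1 : R) - 1 ∈ Ideal.span (s : Set A) := by
    have key : ∀ (u : Finset (Fin k)) (g : G),
        AddMonoidAlgebra.single (∑ i ∈ u, Pi.single i (g i)) (1 : R) - 1
          ∈ Ideal.span (s : Set A) := by
      intro u
      induction u using Finset.induction with
      | empty =>
        intro g
        simp [hone]
      | insert _ _ ha ih =>
        rename_i i t
        intro g
        rw [Finset.sum_insert ha]
        have hrec := ih g
        have hgen : AddMonoidAlgebra.single (Pi.single i (g i)) (1 : R) - 1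
            ∈ Ideal.span (s : Set A) := by
          have hcases : g i = 0 ∨ g i = 1 := by
            generalize g i = x; revert x; decide
          rcases hcases with h' | h'
          · rw [h']
            simp [hone]
          · rw [h']
            apply Ideal.subset_span
            simp only [hs, Finset.coe_image, Finset.coe_univ, Set.image_univ, Set.mem_range]
            exact ⟨i, rfl⟩
        set x := AddMonoidAlgebra.single ((Pi.single i (g i) : G)) (1 : R)
        set y := AddMonoidAlgebra.single (∑ j ∈ t, (Pi.single j (g j) : G)) (1 : R)
        have hxy : AddMonoidAlgebra.single ((Pi.single i (g i) : G) + ∑ j ∈ t, (Pi.single j (g j) : G))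
            (1 : R) = x * y := (hmul _ _).symm
        rw [hxy]
        have : x * y - 1 = (x - 1) * (y - 1) + (x - 1) + (y - 1) := by ring
        rw [this]
        exact Ideal.add_mem _ (Ideal.add_mem _
          (Ideal.mul_mem_right _ _ hgen) hgen) hrec
    intro g
    have hrepr : (∑ i ∈ Finset.univ, (Pi.single i (g i) : G)) = g :=
      Finset.univ_sum_single g
    have := key Finset.univ g
    rwa [hrepr] at this
  -- the kernel is contained in the span
  have hker : RingHom.ker ε ≤ Ideal.span (s : Set A) := by
    intro f hf
    have hf0 : ε f = 0 := hf
    have hrepr : f = ∑ g ∈ f.coeff.support, (f.coeff g) • (AddMonoidAlgebra.single g (1 : R) - 1) := by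
      have h1 : f = ∑ g ∈ f.coeff.support, AddMonoidAlgebra.single g (f.coeff g) :=
        (AddMonoidAlgebra.sum_coeff_single f).symm
      have h2 : (0 : A) = algebraMap R A (ε f) := by rw [hf0, map_zero]
      calc f = f - algebraMap R A (ε f) := by rw [hf0]; simp
        _ = (∑ g ∈ f.coeff.support, AddMonoidAlgebra.single g (f.coeff g))
              - algebraMap R A (ε (∑ g ∈ f.coeff.support, AddMonoidAlgebra.single g (f.coeff g))) := by
            rw [← h1]
        _ = ∑ g ∈ f.coeff.support, (AddMonoidAlgebra.single g (f.coeff g)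
              - algebraMap R A (ε (AddMonoidAlgebra.single g (f.coeff g)))) := by
            rw [map_sum, map_sum, Finset.sum_sub_distrib]
        _ = ∑ g ∈ f.coeff.support, (f.coeff g) • (AddMonoidAlgebra.single g (1 : R) - 1) := by
            refine Finset.sum_congr rfl fun g _ => ?_
            rw [hε, smul_sub, Algebra.algebraMap_eq_smul_one]
            congr 1
            rw [AddMonoidAlgebra.smul_single', mul_one]
    rw [hrepr]
    exact Ideal.sum_mem _ fun g _ => Submodule.smul_of_tower_mem _ _ (hmem g)
  -- conclude
  have hcard : s.card ≤ k := (Finset.card_image_le).trans (by simp)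
  have hspan : Ideal.span (s : Set A) ^ (k + 1) = ⊥ := by
    have hbot := aux_span_pow_eq_bot s (fun a ha => by
      simp only [hs, Finset.mem_image] at ha
      obtain ⟨i, _, rfl⟩ := ha
      exact hsq _)
    calc Ideal.span (s : Set A) ^ (k + 1)
        = Ideal.span (s : Set A) ^ (s.card + 1) * Ideal.span (s : Set A) ^ (k - s.card) := by
          rw [← pow_add]; congr 1; omega
      _ = ⊥ := by rw [hbot]; simp
  refine le_bot_iff.mp ?_
  calc (RingHom.ker ε) ^ (k + 1) ≤ Ideal.span (s : Set A) ^ (k + 1) :=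
        Ideal.pow_right_mono hker (k + 1)
    _ = ⊥ := hspan
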